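/- Let ℒ = (V,E) be a 3-valent hypergraph equipped with a family of edge operators K_e whose triangle operators are all of Z-type, and form the derived solid and dashed link operators K'. If a vector P ∈ (F₂ × F₂)^V satisfies ω(P, K') = 0 for every solid link operator and every dashed link operator K', then P = Σ_{e∈M} K_e for some cycle M ⊆ E. Combined with the converse inclusion, this shows that the centralizer of the gauge group generated by the two-qubit link operators is exactly the group of loop operators. -/

import Mathlib

open Finset

/-- The symplectic form `ω` on Pauli operators modulo phase, modeled as vectors in
`(F₂ × F₂)^V`. -/
def omegaForm {V : Type*} [Fintype V] (P Q : V → ZMod 2 × ZMod 2) : ZMod 2 :=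
  ∑ u : V, ((P u).1 * (Q u).2 + (P u).2 * (Q u).1)

/-- The dashed link operator associated to a pair of vertices `u, v` of a triangle:
it equals `(0,1)` (a Pauli `Z`) at `u` and at `v` and vanishes elsewhere. -/
def dashedOp {V : Type*} [DecidableEq V] (u v : V) : V → ZMod 2 × ZMod 2 :=
  fun w => if w = u ∨ w = v then ((0 : ZMod 2), (1 : ZMod 2)) else 0

/-- The symplectic pairing on a single qubit. -/
def sp (x y : ZMod 2 × ZMod 2) : ZMod 2 := x.1 * y.2 + x.2 * y.1

lemma sp_self : ∀ x : ZMod 2 × ZMod 2, sp x x = 0 := by decide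

lemma sp_zero_right : ∀ x : ZMod 2 × ZMod 2, sp x 0 = 0 := by decide

lemma sp_zero_left : ∀ x : ZMod 2 × ZMod 2, sp 0 x = 0 := by decide

set_option synthInstance.maxSize 1000 in
lemma key_parity : ∀ x a b c : ZMod 2 × ZMod 2, a ≠ 0 → b ≠ 0 → c ≠ 0 →
    a ≠ b → a ≠ c → b ≠ c →
    (if sp x a = 1 then (1 : ZMod 2) else 0) + (if sp x b = 1 then 1 else 0) +
      (if sp x c = 1 then 1 else 0) = 0 := by decide

set_option synthInstance.maxSize 1000 in
lemma key_sum : ∀ x a b c : ZMod 2 × ZMod 2, a ≠ 0 → b ≠ 0 → c ≠ 0 →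
    a ≠ b → a ≠ c → b ≠ c →
    (if sp x a = 1 then a else 0) + (if sp x b = 1 then b else 0) +
      (if sp x c = 1 then c else 0) = x := by decide

lemma two_cancel : ∀ a b : ZMod 2, a + b = 0 → a = b := by decide

lemma omega_support {V : Type*} [Fintype V] (P Q : V → ZMod 2 × ZMod 2) (s : Finset V)
    (h : ∀ u ∉ s, sp (P u) (Q u) = 0) :
    omegaForm P Q = ∑ u ∈ s, sp (P u) (Q u) := by
  show (∑ u : V, sp (P u) (Q u)) = _
  exact (Finset.sum_subset (Finset.subset_univ s) (fun x _ hx => h x hx)).symm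

lemma sum_triple {α β : Type*} [DecidableEq α] [AddCommMonoid β] {a b c : α}
    (hab : a ≠ b) (hac : a ≠ c) (hbc : b ≠ c) (f : α → β) :
    ∑ x ∈ ({a, b, c} : Finset α), f x = f a + f b + f c := by
  rw [show ({a, b, c} : Finset α) = insert a (insert b {c}) from rfl,
    Finset.sum_insert (by simp [hab, hac]), Finset.sum_insert (by simp [hbc]),
    Finset.sum_singleton, add_assoc]

theorem stmt8 {V : Type*} [Fintype V] [DecidableEq V]
    (E : Finset (Finset V))
    (hcard : ∀ e ∈ E, e.card = 2 ∨ e.card = 3)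
    (hreg : ∀ v : V, (E.filter (fun e => v ∈ e)).card = 3)
    (hint : ∀ e ∈ E, ∀ e' ∈ E, e ≠ e' → (e ∩ e').card ≤ 1)
    (htri : ∀ e ∈ E, ∀ e' ∈ E, e ≠ e' → e.card = 3 → e'.card = 3 → e ∩ e' = ∅)
    (K : Finset V → V → ZMod 2 × ZMod 2)
    (hsupp : ∀ e ∈ E, ∀ u : V, K e u ≠ 0 ↔ u ∈ e)
    (hKcomm : ∀ e ∈ E, ∀ e' ∈ E, e ≠ e' →
      omegaForm (K e) (K e') = if (e ∩ e').card = 1 then 1 else 0)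
    (hZ : ∀ t ∈ E, t.card = 3 → ∀ u ∈ t, K t u = ((0 : ZMod 2), (1 : ZMod 2)))
    (P : V → ZMod 2 × ZMod 2)
    (hPsolid : ∀ e ∈ E, e.card = 2 → omegaForm P (K e) = 0)
    (hPdashed : ∀ t ∈ E, t.card = 3 → ∀ u ∈ t, ∀ v ∈ t, u ≠ v →
      omegaForm P (dashedOp u v) = 0) :
    ∃ M ⊆ E, (∀ v : V, Even ((M.filter (fun e => v ∈ e)).card)) ∧
      P = ∑ e ∈ M, K e := by
  classical
  have hKzero : ∀ e ∈ E, ∀ u : V, u ∉ e → K e u = 0 := by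
    intro e he u hu
    by_contra h
    exact hu ((hsupp e he u).mp h)
  have hNZ : ∀ e ∈ E, ∀ v ∈ e, K e v ≠ 0 := fun e he v hv => (hsupp e he v).mpr hv
  -- consistency along an edge
  have hB : ∀ e ∈ E, ∀ u ∈ e, ∀ v ∈ e, sp (P u) (K e u) = sp (P v) (K e v) := by
    intro e he u hu v hv
    by_cases huv : u = v
    · subst huv; rfl
    rcases hcard e he with h2 | h3
    · -- link
      have hev : ({u, v} : Finset V) = e := by
        apply Finset.eq_of_subset_of_card_le
        · intro w hw
          rcases Finset.mem_insert.mp hw with h | h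
          · exact h ▸ hu
          · exact (Finset.mem_singleton.mp h) ▸ hv
        · rw [h2, Finset.card_pair huv]
      have h0 := hPsolid e he h2
      rw [omega_support P (K e) {u, v} (by
        intro w hw
        have hwe : w ∉ e := by rw [← hev]; exact hw
        rw [hKzero e he w hwe, sp_zero_right]), Finset.sum_pair huv] at h0
      exact two_cancel _ _ h0
    · -- triangle
      have hKu := hZ e he h3 u hu
      have hKv := hZ e he h3 v hv
      have h0 := hPdashed e he h3 u hu v hv huv
      rw [omega_support P (dashedOp u v) {u, v} (by
        intro w hw
        have : dashedOp u v w = 0 := by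
          simp only [Finset.mem_insert, Finset.mem_singleton] at hw
          push_neg at hw
          simp [dashedOp, hw.1, hw.2]
        rw [this, sp_zero_right]), Finset.sum_pair huv] at h0
      have hdu : dashedOp u v u = ((0 : ZMod 2), (1 : ZMod 2)) := by simp [dashedOp]
      have hdv : dashedOp u v v = ((0 : ZMod 2), (1 : ZMod 2)) := by simp [dashedOp]
      rw [hdu, hdv] at h0
      rw [hKu, hKv]
      exact two_cancel _ _ h0
  -- distinctness of edge operator values at a shared vertex
  have hA : ∀ e ∈ E, ∀ e' ∈ E, e ≠ e' → ∀ v, v ∈ e → v ∈ e' → K e v ≠ K e' v := by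
    intro e he e' he' hne v hv hv'
    have hv1 : v ∈ e ∩ e' := Finset.mem_inter.mpr ⟨hv, hv'⟩
    have hinter : e ∩ e' = {v} := by
      have hc : (e ∩ e').card = 1 :=
        le_antisymm (hint e he e' he' hne) (Finset.one_le_card.mpr ⟨v, hv1⟩)
      obtain ⟨w, hw⟩ := Finset.card_eq_one.mp hc
      rw [hw] at hv1 ⊢
      rw [Finset.mem_singleton.mp hv1]
    have hω := hKcomm e he e' he' hne
    rw [hinter, Finset.card_singleton, if_pos rfl] at hω
    rw [omega_support (K e) (K e') {v} (by
      intro w hw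
      rw [Finset.mem_singleton] at hw
      by_cases hwe : w ∈ e
      · have hwe' : w ∉ e' := by
          intro hin
          exact hw (Finset.mem_singleton.mp (hinter ▸ Finset.mem_inter.mpr ⟨hwe, hin⟩))
        rw [hKzero e' he' w hwe', sp_zero_right]
      · rw [hKzero e he w hwe, sp_zero_left]), Finset.sum_singleton] at hω
    intro heq
    rw [heq, sp_self] at hω
    exact absurd hω (by decide)
  set M := E.filter (fun e => ∃ w, w ∈ e ∧ sp (P w) (K e w) = 1) with hMdef
  have hM : ∀ e ∈ E, ∀ v ∈ e, (e ∈ M ↔ sp (P v) (K e v) = 1) := by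
    intro e he v hv
    rw [hMdef, Finset.mem_filter]
    constructor
    · rintro ⟨-, w, hw, h1⟩
      rw [← hB e he w hw v hv]
      exact h1
    · intro h
      exact ⟨he, v, hv, h⟩
  have hMv : ∀ v : V, M.filter (fun e => v ∈ e)
      = (E.filter (fun e => v ∈ e)).filter (fun e => sp (P v) (K e v) = 1) := by
    intro v
    ext e
    simp only [Finset.mem_filter]
    constructor
    · rintro ⟨heM, hve⟩
      have heE : e ∈ E := Finset.mem_of_mem_filter e heM
      exact ⟨⟨heE, hve⟩, (hM e heE v hve).mp heM⟩
    · rintro ⟨⟨heE, hve⟩, h1⟩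
      exact ⟨(hM e heE v hve).mpr h1, hve⟩
  refine ⟨M, Finset.filter_subset _ _, ?_, ?_⟩
  · -- cycle condition
    intro v
    obtain ⟨a, b, c, hab, hac, hbc, hEv⟩ := Finset.card_eq_three.mp (hreg v)
    have haE : a ∈ E ∧ v ∈ a := by
      have := hEv ▸ (Finset.mem_insert_self a {b, c}); exact Finset.mem_filter.mp this
    have hbE : b ∈ E ∧ v ∈ b := by
      have : b ∈ E.filter (fun e => v ∈ e) := by rw [hEv]; simp
      exact Finset.mem_filter.mp this
    have hcE : c ∈ E ∧ v ∈ c := by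
      have : c ∈ E.filter (fun e => v ∈ e) := by rw [hEv]; simp
      exact Finset.mem_filter.mp this
    rw [← ZMod.natCast_eq_zero_iff_even, hMv v, hEv, Finset.card_filter,
      sum_triple hab hac hbc]
    push_cast
    exact key_parity (P v) (K a v) (K b v) (K c v)
      (hNZ a haE.1 v haE.2) (hNZ b hbE.1 v hbE.2) (hNZ c hcE.1 v hcE.2)
      (hA a haE.1 b hbE.1 hab v haE.2 hbE.2)
      (hA a haE.1 c hcE.1 hac v haE.2 hcE.2)
      (hA b hbE.1 c hcE.1 hbc v hbE.2 hcE.2)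
  · -- P is the loop operator of M
    funext v
    rw [Finset.sum_apply]
    obtain ⟨a, b, c, hab, hac, hbc, hEv⟩ := Finset.card_eq_three.mp (hreg v)
    have haE : a ∈ E ∧ v ∈ a := by
      have : a ∈ E.filter (fun e => v ∈ e) := by rw [hEv]; simp
      exact Finset.mem_filter.mp this
    have hbE : b ∈ E ∧ v ∈ b := by
      have : b ∈ E.filter (fun e => v ∈ e) := by rw [hEv]; simp
      exact Finset.mem_filter.mp this
    have hcE : c ∈ E ∧ v ∈ c := by
      have : c ∈ E.filter (fun e => v ∈ e) := by rw [hEv]; simp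
      exact Finset.mem_filter.mp this
    have hrestrict : ∑ e ∈ M, K e v = ∑ e ∈ M.filter (fun e => v ∈ e), K e v := by
      symm
      apply Finset.sum_filter_of_ne
      intro e heM hne
      exact (hsupp e (Finset.mem_of_mem_filter e heM) v).mp hne
    rw [hrestrict, hMv v, hEv, Finset.sum_filter, sum_triple hab hac hbc]
    exact (key_sum (P v) (K a v) (K b v) (K c v)
      (hNZ a haE.1 v haE.2) (hNZ b hbE.1 v hbE.2) (hNZ c hcE.1 v hcE.2)
      (hA a haE.1 b hbE.1 hab v haE.2 hbE.2)
      (hA a haE.1 c hcE.1 hac v haE.2 hcE.2)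
      (hA b hbE.1 c hcE.1 hbc v hbE.2 hcE.2)).symm
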